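/- arXiv:math/0611615 — 3 statements merged into one kernel-verified Lean document; each statement's English description precedes it below -/
import Mathlib

section
/- Let G₁ and G₂ be nontrivial groups. Set K₁ = ℤ (written multiplicatively), K₂ = K₁ ≀ G₁ and K₃ = K₂ ≀ G₂. Inside K₃, let H₂ = {(f, 1_{G₂}) : f ∈ B(K₂,G₂)} (the base group of the outer wreath product) and let H₁ = {(f, 1_{G₂}) : f ∈ B(K₂,G₂) and f(1_{G₂}) ∈ B(K₁,G₁) × {1_{G₁}}} (those f whose value at 1_{G₂} lies in the base group of K₂). Then: (i) H₁ is a normal subgroup of H₂ and H₂/H₁ is isomorphic to G₁; (ii) H₂ is a normal subgroup of K₃ and K₃/H₂ is isomorphic to G₂; (iii) N_{K₃}(H₁) = H₂; (iv) N_{K₃}(H₂) = K₃. -/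
open scoped Classical

/-- The base group `B(K,G)` of the restricted wreath product: finitely supported
functions `G → K` under pointwise multiplication. -/
def baseGroup (K G : Type) [Group K] [Group G] : Subgroup (G → K) where
  carrier := {f | (Function.mulSupport f).Finite}
  one_mem' := by
    show (Function.mulSupport (1 : G → K)).Finite
    exact Set.finite_empty.subset (fun x hx => (hx rfl).elim)
  mul_mem' := by
    intro f g hf hg
    show (Function.mulSupport (f * g)).Finite
    exact ((Set.Finite.union hf hg).subset (Function.mulSupport_mul f g))
  inv_mem' := by
    intro f hf
    show (Function.mulSupport (f⁻¹ : G → K)).Finite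
    simpa [Function.mulSupport_inv] using hf

lemma mem_baseGroup_iff {K G : Type} [Group K] [Group G] (f : G → K) :
    f ∈ baseGroup K G ↔ (Function.mulSupport f).Finite := Iff.rfl

variable (K G : Type) [Group K] [Group G]

/-- Left-translation of a finitely supported function. -/
def shiftEquiv (g : G) : baseGroup K G ≃* baseGroup K G where
  toFun f := ⟨fun x => (f : G → K) (g⁻¹ * x), by
    rw [mem_baseGroup_iff]
    have hf : (Function.mulSupport (f : G → K)).Finite := f.2
    refine (hf.image (fun y => g * y)).subset ?_
    intro x hx
    exact ⟨g⁻¹ * x, hx, by group⟩⟩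
  invFun f := ⟨fun x => (f : G → K) (g * x), by
    rw [mem_baseGroup_iff]
    have hf : (Function.mulSupport (f : G → K)).Finite := f.2
    refine (hf.image (fun y => g⁻¹ * y)).subset ?_
    intro x hx
    exact ⟨g * x, hx, by group⟩⟩
  left_inv f := by
    ext x
    simp
  right_inv f := by
    ext x
    simp
  map_mul' f₁ f₂ := by
    ext x
    rfl

/-- The left-translation action of `G` on `B(K,G)` as a homomorphism into automorphisms. -/
def shiftHom : G →* MulAut (baseGroup K G) where
  toFun := shiftEquiv K G
  map_one' := by
    ext f x
    simp [shiftEquiv]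
  map_mul' g₁ g₂ := by
    ext f x
    simp [shiftEquiv, mul_assoc]

/-- The restricted wreath product `K ≀ G`. -/
abbrev wreath := (baseGroup K G) ⋊[shiftHom K G] G

/-- `ι(k) ∈ B(K,G)`: the function equal to `k` at `1` and `1` elsewhere. -/
noncomputable def iota (k : K) : baseGroup K G :=
  ⟨fun x => if x = 1 then k else 1, by
    rw [mem_baseGroup_iff]
    refine (Set.finite_singleton (1 : G)).subset ?_
    intro x hx
    by_contra h
    exact hx (if_neg h)⟩


/-- Auxiliary: the function supported at `a` with value `k`. -/
noncomputable def delta (a : G) (k : K) : baseGroup K G :=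
  ⟨fun x => if x = a then k else 1, by
    rw [mem_baseGroup_iff]
    refine (Set.finite_singleton a).subset ?_
    intro x hx
    by_contra h
    exact hx (if_neg h)⟩

lemma shiftHom_apply' (g : G) (f : baseGroup K G) (x : G) :
    ((shiftHom K G g f : baseGroup K G) : G → K) x = (f : G → K) (g⁻¹ * x) := rfl

lemma wreath_mul_left_apply (a b : wreath K G) (x : G) :
    (((a * b).left : baseGroup K G) : G → K) x
      = ((a.left : baseGroup K G) : G → K) x
        * ((b.left : baseGroup K G) : G → K) (a.right⁻¹ * x) := rfl

lemma wreath_inv_left_apply (a : wreath K G) (x : G) :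
    (((a⁻¹).left : baseGroup K G) : G → K) x
      = (((a.left : baseGroup K G) : G → K) (a.right⁻¹⁻¹ * x))⁻¹ := rfl

lemma wreath_conj_right (w h : wreath K G) :
    (w * h * w⁻¹).right = w.right * h.right * w.right⁻¹ := rfl

lemma wreath_conj_left_apply (w h : wreath K G) (hh : h.right = 1) (x : G) :
    (((w * h * w⁻¹).left : baseGroup K G) : G → K) x
      = ((w.left : baseGroup K G) : G → K) x
        * ((h.left : baseGroup K G) : G → K) (w.right⁻¹ * x)
        * (((w.left : baseGroup K G) : G → K) x)⁻¹ := by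
  rw [wreath_mul_left_apply, wreath_mul_left_apply, wreath_inv_left_apply,
      SemidirectProduct.mul_right, hh, mul_one, inv_inv, mul_inv_cancel_left]

/-- With `K₁ = ℤ` (multiplicative), `K₂ = K₁ ≀ G₁`, `K₃ = K₂ ≀ G₂`,
`H₂` the base group of `K₃` and `H₁ ⊆ H₂` those `(f, 1)` with `f(1)` in the base group
of `K₂`, we have: (i) `H₁ ⊴ H₂` with `H₂/H₁ ≅ G₁`; (ii) `H₂ ⊴ K₃` with `K₃/H₂ ≅ G₂`;
(iii) `N_{K₃}(H₁) = H₂`; (iv) `N_{K₃}(H₂) = K₃`.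
The quotient isomorphisms are encoded as surjective homomorphisms with the
corresponding kernels. -/
theorem alpha_three_example (G₁ G₂ : Type) [Group G₁] [Group G₂]
    [Nontrivial G₁] [Nontrivial G₂] :
    ∃ H₁ H₂ : Subgroup (wreath (wreath (Multiplicative ℤ) G₁) G₂),
      (H₂ : Set (wreath (wreath (Multiplicative ℤ) G₁) G₂)) = {w | w.right = 1} ∧
      (H₁ : Set (wreath (wreath (Multiplicative ℤ) G₁) G₂)) =
        {w | w.right = 1 ∧ ((w.left : G₂ → wreath (Multiplicative ℤ) G₁) 1).right = 1} ∧
      -- (i) H₁ is normal in H₂ with H₂/H₁ ≅ G₁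
      H₁ ≤ H₂ ∧ (H₁.subgroupOf H₂).Normal ∧
      (∃ φ : H₂ →* G₁, Function.Surjective φ ∧ φ.ker = H₁.subgroupOf H₂) ∧
      -- (ii) H₂ is normal in K₃ with K₃/H₂ ≅ G₂
      H₂.Normal ∧
      (∃ ψ : wreath (wreath (Multiplicative ℤ) G₁) G₂ →* G₂,
        Function.Surjective ψ ∧ ψ.ker = H₂) ∧
      -- (iii) N_{K₃}(H₁) = H₂
      Subgroup.normalizer (H₁ : Set (wreath (wreath (Multiplicative ℤ) G₁) G₂)) = H₂ ∧
      -- (iv) N_{K₃}(H₂) = K₃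
      Subgroup.normalizer (H₂ : Set (wreath (wreath (Multiplicative ℤ) G₁) G₂)) = ⊤ := by
  classical
  set H₂ : Subgroup (wreath (wreath (Multiplicative ℤ) G₁) G₂) :=
    (SemidirectProduct.rightHom : wreath (wreath (Multiplicative ℤ) G₁) G₂ →* G₂).ker with hH₂
  have memH₂ : ∀ w : wreath (wreath (Multiplicative ℤ) G₁) G₂,
      w ∈ H₂ ↔ w.right = 1 := fun w => Iff.rfl
  set H₁ : Subgroup (wreath (wreath (Multiplicative ℤ) G₁) G₂) :=
    { carrier := {w | w.right = 1 ∧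
        ((w.left : G₂ → wreath (Multiplicative ℤ) G₁) 1).right = 1}
      one_mem' := ⟨rfl, rfl⟩
      mul_mem' := by
        rintro a b ⟨ha1, ha2⟩ ⟨hb1, hb2⟩
        refine ⟨by show a.right * b.right = 1; rw [ha1, hb1, mul_one], ?_⟩
        show (((a * b).left : G₂ → wreath (Multiplicative ℤ) G₁) 1).right = 1
        rw [wreath_mul_left_apply, ha1, inv_one, one_mul, SemidirectProduct.mul_right,
          ha2, hb2, mul_one]
      inv_mem' := by
        rintro a ⟨ha1, ha2⟩
        refine ⟨by show a.right⁻¹ = 1; rw [ha1, inv_one], ?_⟩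
        show (((a⁻¹).left : G₂ → wreath (Multiplicative ℤ) G₁) 1).right = 1
        rw [wreath_inv_left_apply, ha1, inv_one, inv_one, one_mul,
          SemidirectProduct.inv_right, ha2, inv_one] } with hH₁
  have memH₁ : ∀ w : wreath (wreath (Multiplicative ℤ) G₁) G₂,
      w ∈ H₁ ↔ w.right = 1 ∧
        ((w.left : G₂ → wreath (Multiplicative ℤ) G₁) 1).right = 1 := fun w => Iff.rfl
  refine ⟨H₁, H₂, rfl, rfl, ?_, ?_, ?_, ?_, ?_, ?_, ?_⟩
  · intro w hw; exact ((memH₁ w).mp hw).1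
  · constructor
    rintro ⟨h, hh⟩ hmem ⟨w, hw⟩
    have hw1 : w.right = 1 := hw
    have hh1 : h.right = 1 := ((memH₁ h).mp hmem).1
    have hh2 : ((h.left : G₂ → wreath (Multiplicative ℤ) G₁) 1).right = 1 :=
      ((memH₁ h).mp hmem).2
    refine (memH₁ _).mpr ⟨?_, ?_⟩
    · show (w * h * w⁻¹).right = 1
      rw [wreath_conj_right, hw1, hh1]; simp
    · show (((w * h * w⁻¹).left : G₂ → wreath (Multiplicative ℤ) G₁) 1).right = 1
      rw [wreath_conj_left_apply _ _ _ _ hh1, hw1, inv_one, one_mul,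
        SemidirectProduct.mul_right, SemidirectProduct.mul_right,
        SemidirectProduct.inv_right, hh2]
      simp
  · refine ⟨{ toFun := fun w =>
        (((w : wreath (wreath (Multiplicative ℤ) G₁) G₂).left
          : G₂ → wreath (Multiplicative ℤ) G₁) 1).right
              map_one' := rfl
              map_mul' := ?_ }, ?_, ?_⟩
    · rintro ⟨a, ha⟩ ⟨b, hb⟩
      have ha1 : a.right = 1 := ha
      show (((a * b).left : G₂ → wreath (Multiplicative ℤ) G₁) 1).right = _
      rw [wreath_mul_left_apply, ha1, inv_one, one_mul, SemidirectProduct.mul_right]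
    · intro g₁
      refine ⟨⟨SemidirectProduct.inl
        (iota (wreath (Multiplicative ℤ) G₁) G₂ (SemidirectProduct.inr g₁)), ?_⟩, ?_⟩
      · exact SemidirectProduct.rightHom_inl _
      · show (((iota (wreath (Multiplicative ℤ) G₁) G₂ (SemidirectProduct.inr g₁)
            : baseGroup (wreath (Multiplicative ℤ) G₁) G₂)
            : G₂ → wreath (Multiplicative ℤ) G₁) 1).right = g₁
        simp [iota, SemidirectProduct.rightHom_inr]
    · ext ⟨w, hw⟩
      have hw1 : w.right = 1 := hw
      simp only [MonoidHom.mem_ker, Subgroup.mem_subgroupOf]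
      constructor
      · intro h; exact (memH₁ w).mpr ⟨hw1, h⟩
      · intro h; exact ((memH₁ w).mp h).2
  · exact MonoidHom.normal_ker _
  · exact ⟨SemidirectProduct.rightHom, SemidirectProduct.rightHom_surjective, rfl⟩
  · apply le_antisymm
    · intro w hw
      rw [Subgroup.mem_normalizer_iff] at hw
      by_contra hwr
      have hwr' : w.right ≠ 1 := hwr
      obtain ⟨g₁, hg₁⟩ := exists_ne (1 : G₁)
      set h : wreath (wreath (Multiplicative ℤ) G₁) G₂ :=
        SemidirectProduct.inl (delta (wreath (Multiplicative ℤ) G₁) G₂ w.right⁻¹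
          (SemidirectProduct.inr g₁)) with hh
      have hright : h.right = 1 := rfl
      have hne : (1 : G₂) ≠ w.right⁻¹ :=
        fun e => hwr' (by rw [← inv_inv w.right, ← e, inv_one])
      have hmem : h ∈ H₁ := by
        refine (memH₁ h).mpr ⟨rfl, ?_⟩
        show ((delta (wreath (Multiplicative ℤ) G₁) G₂ w.right⁻¹ (SemidirectProduct.inr g₁)
          : G₂ → wreath (Multiplicative ℤ) G₁) 1).right = 1
        simp [delta, hne]
      have hval : ((h.left : G₂ → wreath (Multiplicative ℤ) G₁) (w.right⁻¹ * 1)).right = g₁ := by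
        show ((delta (wreath (Multiplicative ℤ) G₁) G₂ w.right⁻¹ (SemidirectProduct.inr g₁)
          : G₂ → wreath (Multiplicative ℤ) G₁) (w.right⁻¹ * 1)).right = g₁
        simp [delta, SemidirectProduct.rightHom_inr]
      have hconj := (hw h).mp hmem
      have hc2 := ((memH₁ _).mp hconj).2
      rw [wreath_conj_left_apply _ _ _ _ hright, SemidirectProduct.mul_right,
        SemidirectProduct.mul_right, SemidirectProduct.inv_right, hval] at hc2
      exact hg₁ (conj_eq_one_iff.mp hc2)
    · intro w hw
      have hw1 : w.right = 1 := hw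
      rw [Subgroup.mem_normalizer_iff]
      intro h
      constructor
      · intro hmem
        have hh1 : h.right = 1 := ((memH₁ h).mp hmem).1
        have hh2 := ((memH₁ h).mp hmem).2
        refine (memH₁ _).mpr ⟨by rw [wreath_conj_right, hw1, hh1]; simp, ?_⟩
        rw [wreath_conj_left_apply _ _ _ _ hh1, hw1, inv_one, one_mul,
          SemidirectProduct.mul_right, SemidirectProduct.mul_right,
          SemidirectProduct.inv_right, hh2]
        simp
      · intro hmem
        have hc1 : (w * h * w⁻¹).right = 1 := ((memH₁ _).mp hmem).1
        have hh1 : h.right = 1 := by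
          rw [wreath_conj_right, hw1] at hc1; simpa using hc1
        have hc2 := ((memH₁ _).mp hmem).2
        rw [wreath_conj_left_apply _ _ _ _ hh1, hw1, inv_one, one_mul,
          SemidirectProduct.mul_right, SemidirectProduct.mul_right,
          SemidirectProduct.inv_right] at hc2
        exact (memH₁ h).mpr ⟨hh1, conj_eq_one_iff.mp hc2⟩
  · rw [Subgroup.normalizer_eq_top_iff]; exact MonoidHom.normal_ker _
end

section
/- Let K and G be groups and let W = K ≀ G be the restricted wreath product. Let H be a subgroup of W such that (l, 1_G) ∈ H for every l ∈ L(K,G), and suppose there exists k ∈ K with (ι(k), 1_G) ∉ H. Then every element (f, g) of the normalizer N_W(H) satisfies g = 1_G. -/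
open scoped Classical

variable (K G : Type) [Group K] [Group G]

/-- If a subgroup `H` of `W = K ≀ G` contains `(l, 1)` for every
`l ∈ L(K,G)` but misses `(ι(k), 1)` for some `k ∈ K`, then every element of the
normalizer of `H` in `W` has trivial `G`-component. -/
theorem normalizer_right_eq_one (K G : Type) [Group K] [Group G]
    (H : Subgroup (wreath K G))
    (hL : ∀ l : baseGroup K G, (l : G → K) 1 = 1 → (⟨l, 1⟩ : wreath K G) ∈ H)
    (k : K) (hk : (⟨iota K G k, 1⟩ : wreath K G) ∉ H) :
    ∀ w : wreath K G, w ∈ Subgroup.normalizer (H : Set (wreath K G)) → w.right = 1 := by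
  intro w hw
  by_contra hg
  set f : G → K := (w.left : G → K) with hf
  set g : G := w.right with hgdef
  -- the test function l
  have hginv : (g⁻¹ : G) ≠ 1 := by simpa using inv_ne_one.mpr hg
  set l : baseGroup K G :=
    ⟨fun x => if x = g⁻¹ then (f 1)⁻¹ * k * (f 1) else 1, by
      rw [mem_baseGroup_iff]
      refine (Set.finite_singleton (g⁻¹ : G)).subset ?_
      intro x hx
      by_contra h
      exact hx (if_neg h)⟩ with hl
  have hl1 : (l : G → K) 1 = 1 := if_neg (fun h => hginv h.symm)
  have hlH : (⟨l, 1⟩ : wreath K G) ∈ H := hL l hl1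
  have hconj := (Subgroup.mem_normalizer_iff.mp hw _).mp hlH
  set m : baseGroup K G := w.left * shiftHom K G g l * w.left⁻¹ with hm
  have hweq : w * ⟨l, 1⟩ * w⁻¹ = (⟨m, 1⟩ : wreath K G) := by
    ext
    · simp [hm, SemidirectProduct.mul_left, mul_assoc, map_mul, map_inv, ← hgdef]
    · simp
  rw [hweq] at hconj
  have hm1 : (m : G → K) 1 = k := by
    have : (m : G → K) 1 = f 1 * ((l : G → K) (g⁻¹ * 1)) * (f 1)⁻¹ := rfl
    rw [this]
    simp [hl]
    group
  set m' : baseGroup K G := (iota K G k)⁻¹ * m with hm'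
  have hm'1 : (m' : G → K) 1 = 1 := by
    have : (m' : G → K) 1 = ((iota K G k : G → K) 1)⁻¹ * (m : G → K) 1 := rfl
    rw [this, hm1]
    simp [iota]
  have hm'H : (⟨m', 1⟩ : wreath K G) ∈ H := hL m' hm'1
  have : (⟨iota K G k, 1⟩ : wreath K G) = (⟨m, 1⟩ : wreath K G) * (⟨m', 1⟩ : wreath K G)⁻¹ := by
    ext
    · simp [hm', mul_assoc]
    · simp
  exact hk (this ▸ H.mul_mem hconj (H.inv_mem hm'H))
end

section
/- Assume the crossed product setting: N is a II₁ factor on 𝓗 and θ is a properly outer action of the countable discrete group K on N. Let 𝒜 ⊆ B(ℓ²(K,𝓗)) be the set of operators T for which there exist x ∈ N and z ∈ N' such that (Tξ)(k) = z(θ_k(x)(ξ(k))) for all ξ ∈ ℓ²(K,𝓗) and k ∈ K. Then the double commutant 𝒜'' equals the set of all bounded operators T on ℓ²(K,𝓗) for which there exists a uniformly bounded family (X_k)_{k∈K} in B(𝓗) (i.e. sup_k ‖X_k‖ < ∞) with (Tξ)(k) = X_k(ξ(k)) for all ξ ∈ ℓ²(K,𝓗) and k ∈ K. -/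
set_option linter.unusedSectionVars false
set_option maxHeartbeats 1000000
open scoped ENNReal


noncomputable section

variable {𝓗 : Type} [NormedAddCommGroup 𝓗] [InnerProductSpace ℂ 𝓗] [CompleteSpace 𝓗]
variable {K : Type} [Group K]

/-- `N` is a factor: its intersection with its commutant consists of the scalars. -/
def IsFactor (N : VonNeumannAlgebra 𝓗) : Prop :=
  (N : Set (𝓗 →L[ℂ] 𝓗)) ∩ Set.centralizer (N : Set (𝓗 →L[ℂ] 𝓗)) =
    Set.range (fun z : ℂ => z • (1 : 𝓗 →L[ℂ] 𝓗))

/-- `N` is finite: every isometry in `N` is a unitary. -/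
def IsFiniteVNA (N : VonNeumannAlgebra 𝓗) : Prop :=
  ∀ v ∈ N, star v * v = 1 → v * star v = 1

/-- `N` is infinite-dimensional as a complex vector space. -/
def IsInfiniteDimensionalVNA (N : VonNeumannAlgebra 𝓗) : Prop :=
  ¬ ∃ s : Finset (𝓗 →L[ℂ] 𝓗),
      (N : Set (𝓗 →L[ℂ] 𝓗)) ⊆ (Submodule.span ℂ (s : Set (𝓗 →L[ℂ] 𝓗)) : Set (𝓗 →L[ℂ] 𝓗))

/-- `N` is a II₁ factor: an infinite-dimensional finite factor. -/
def IsIIOneFactor (N : VonNeumannAlgebra 𝓗) : Prop :=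
  IsFactor N ∧ IsFiniteVNA N ∧ IsInfiniteDimensionalVNA N

/-- `θ` is an action of `K` on `N` by *-automorphisms (recorded on the ambient
algebra `B(𝓗)`, with all requirements imposed on elements of `N`). -/
def IsStarAction (N : VonNeumannAlgebra 𝓗) (θ : K → (𝓗 →L[ℂ] 𝓗) → (𝓗 →L[ℂ] 𝓗)) : Prop :=
  (∀ k : K, ∀ x ∈ N, θ k x ∈ N) ∧
  (∀ x ∈ N, θ 1 x = x) ∧
  (∀ g k : K, ∀ x ∈ N, θ (g * k) x = θ g (θ k x)) ∧
  (∀ k : K, ∀ x ∈ N, ∀ y ∈ N, θ k (x + y) = θ k x + θ k y) ∧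
  (∀ (k : K) (c : ℂ), ∀ x ∈ N, θ k (c • x) = c • θ k x) ∧
  (∀ k : K, ∀ x ∈ N, ∀ y ∈ N, θ k (x * y) = θ k x * θ k y) ∧
  (∀ k : K, ∀ x ∈ N, θ k (star x) = star (θ k x))

/-- `θ` is properly outer: for `k ≠ 1` only `x = 0` in `N` satisfies
`x y = θ_k(y) x` for all `y ∈ N`. -/
def IsProperlyOuter (N : VonNeumannAlgebra 𝓗) (θ : K → (𝓗 →L[ℂ] 𝓗) → (𝓗 →L[ℂ] 𝓗)) : Prop :=
  ∀ k : K, k ≠ 1 → ∀ x ∈ N, (∀ y ∈ N, x * y = θ k y * x) → x = 0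

/-- The operators `π(x)`, `x ∈ N`, on `ℓ²(K,𝓗)`: `(π(x)ξ)(g) = θ_{g⁻¹}(x)(ξ(g))`. -/
def piSet (N : VonNeumannAlgebra 𝓗) (θ : K → (𝓗 →L[ℂ] 𝓗) → (𝓗 →L[ℂ] 𝓗)) :
    Set (lp (fun _ : K => 𝓗) 2 →L[ℂ] lp (fun _ : K => 𝓗) 2) :=
  {T | ∃ x ∈ N, ∀ (ξ : lp (fun _ : K => 𝓗) 2) (g : K), (T ξ) g = θ g⁻¹ x (ξ g)}

/-- The unitaries `λ_k`, `k ∈ S`, on `ℓ²(K,𝓗)`: `(λ_kξ)(g) = ξ(k⁻¹g)`. -/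
def lambdaSet (S : Set K) :
    Set (lp (fun _ : K => 𝓗) 2 →L[ℂ] lp (fun _ : K => 𝓗) 2) :=
  {T | ∃ k ∈ S, ∀ (ξ : lp (fun _ : K => 𝓗) 2) (g : K), (T ξ) g = ξ (k⁻¹ * g)}

/-- The crossed product `N ⋊_θ S`: the von Neumann algebra (double commutant) generated
by the `π(x)` for `x ∈ N` together with the `λ_k` for `k ∈ S`. -/
def crossedProduct (N : VonNeumannAlgebra 𝓗) (θ : K → (𝓗 →L[ℂ] 𝓗) → (𝓗 →L[ℂ] 𝓗))
    (S : Set K) : Set (lp (fun _ : K => 𝓗) 2 →L[ℂ] lp (fun _ : K => 𝓗) 2) :=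
  Set.centralizer (Set.centralizer (piSet N θ ∪ lambdaSet S))

lemma isClosed_centralizer' (S : Set (𝓗 →L[ℂ] 𝓗)) : IsClosed (Set.centralizer S) := by
  have h : Set.centralizer S = ⋂ m ∈ S, {c : 𝓗 →L[ℂ] 𝓗 | m * c = c * m} := by
    ext c; simp [Set.mem_centralizer_iff]
  rw [h]
  exact isClosed_biInter fun m _ => isClosed_eq (continuous_mul_left m) (continuous_mul_right m)

section evalsingle
variable [DecidableEq K]

def evalCLM' (g : K) : lp (fun _ : K => 𝓗) 2 →L[ℂ] 𝓗 :=
  LinearMap.mkContinuous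
    { toFun := fun f => f g
      map_add' := fun f g' => congrFun (lp.coeFn_add f g') g
      map_smul' := fun c f => congrFun (lp.coeFn_smul c f) g }
    1 (fun f => by simpa using lp.norm_apply_le_norm two_ne_zero f g)

@[simp] lemma evalCLM'_apply (g : K) (f : lp (fun _ : K => 𝓗) 2) : evalCLM' g f = f g := rfl

def singleCLM' (g : K) : 𝓗 →L[ℂ] lp (fun _ : K => 𝓗) 2 :=
  LinearMap.mkContinuous
    { toFun := fun v => lp.single 2 g v
      map_add' := fun v w => by
        apply lp.ext; funext j
        by_cases h : j = g
        · subst h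
          rw [lp.coeFn_add]
          simp [lp.single_apply_self]
        · rw [lp.coeFn_add]
          simp [lp.single_apply_ne _ _ _ h]
      map_smul' := fun c v => by simp [lp.single_smul] }
    1 (fun v => by
      simpa using le_of_eq (lp.norm_single (by norm_num) (fun _ : K => v) g))

@[simp] lemma singleCLM'_apply (g : K) (v : 𝓗) : singleCLM' g v = lp.single 2 g v := rfl

end evalsingle

section action
variable {N : VonNeumannAlgebra 𝓗} {θ : K → (𝓗 →L[ℂ] 𝓗) → (𝓗 →L[ℂ] 𝓗)}

lemma theta_inv_theta (hθ : IsStarAction N θ) (k : K) {y : 𝓗 →L[ℂ] 𝓗} (hy : y ∈ N) :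
    θ k⁻¹ (θ k y) = y := by
  have h := hθ.2.2.1 k⁻¹ k y hy
  rw [inv_mul_cancel, hθ.2.1 y hy] at h
  exact h.symm

lemma theta_theta_inv (hθ : IsStarAction N θ) (k : K) {y : 𝓗 →L[ℂ] 𝓗} (hy : y ∈ N) :
    θ k (θ k⁻¹ y) = y := by
  have h := hθ.2.2.1 k k⁻¹ y hy
  rw [mul_inv_cancel, hθ.2.1 y hy] at h
  exact h.symm

lemma theta_one_eq_one (hθ : IsStarAction N θ) (k : K) : θ k 1 = 1 := by
  have h1 : ∀ y ∈ N, θ k 1 * y = y := by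
    intro y hy
    have h2 := hθ.2.2.2.2.2.1 k 1 N.one_mem (θ k⁻¹ y) (hθ.1 k⁻¹ y hy)
    rw [one_mul, theta_theta_inv hθ k hy] at h2
    exact h2.symm
  simpa using h1 1 N.one_mem

/-- θ as an algebra automorphism of the underlying star subalgebra. -/
def thetaAlgEquiv (hθ : IsStarAction N θ) (k : K) :
    N.toStarSubalgebra ≃ₐ[ℂ] N.toStarSubalgebra where
  toFun a := ⟨θ k a, hθ.1 k a a.2⟩
  invFun a := ⟨θ k⁻¹ a, hθ.1 k⁻¹ a a.2⟩
  left_inv a := Subtype.ext (theta_inv_theta hθ k a.2)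
  right_inv a := Subtype.ext (theta_theta_inv hθ k a.2)
  map_mul' a b := Subtype.ext (hθ.2.2.2.2.2.1 k a a.2 b b.2)
  map_add' a b := Subtype.ext (hθ.2.2.2.1 k a a.2 b b.2)
  commutes' c := Subtype.ext (by
    show θ k (algebraMap ℂ (𝓗 →L[ℂ] 𝓗) c) = algebraMap ℂ (𝓗 →L[ℂ] 𝓗) c
    rw [Algebra.algebraMap_eq_smul_one, hθ.2.2.2.2.1 k c 1 N.one_mem,
      theta_one_eq_one hθ k])

lemma isClosed_vna (N : VonNeumannAlgebra 𝓗) :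
    IsClosed (N.toStarSubalgebra : Set (𝓗 →L[ℂ] 𝓗)) := by
  rw [N.coe_toStarSubalgebra, ← N.centralizer_centralizer]
  exact isClosed_centralizer' _

lemma norm_theta_eq (hθ : IsStarAction N θ) (k : K) {x : 𝓗 →L[ℂ] 𝓗} (hx : x ∈ N) :
    ‖θ k x‖ = ‖x‖ := by
  haveI : IsClosed (N.toStarSubalgebra : Set (𝓗 →L[ℂ] 𝓗)) := isClosed_vna N
  have selfadj : ∀ b : 𝓗 →L[ℂ] 𝓗, b ∈ N → IsSelfAdjoint b → ‖θ k b‖ = ‖b‖ := by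
    intro b hb hbsa
    have hbsa' : IsSelfAdjoint (θ k b) := by
      rw [IsSelfAdjoint, ← hθ.2.2.2.2.2.2 k b hb, hbsa.star_eq]
    have hspec : spectrum ℂ (θ k b) = spectrum ℂ b := by
      have h1 : spectrum ℂ (θ k b) =
          spectrum ℂ ((thetaAlgEquiv hθ k ⟨b, hb⟩ : N.toStarSubalgebra) : 𝓗 →L[ℂ] 𝓗) := rfl
      rw [h1, ← StarSubalgebra.spectrum_eq N.toStarSubalgebra
        (a := thetaAlgEquiv hθ k ⟨b, hb⟩), AlgEquiv.spectrum_eq,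
        StarSubalgebra.spectrum_eq N.toStarSubalgebra (a := ⟨b, hb⟩)]
    have hr : spectralRadius ℂ (θ k b) = spectralRadius ℂ b := by
      unfold spectralRadius; rw [hspec]
    have h2 := hbsa'.spectralRadius_eq_nnnorm
    have h3 := hbsa.spectralRadius_eq_nnnorm
    rw [h2, h3] at hr
    exact_mod_cast congrArg ENNReal.toReal hr
  have hx2 : ‖θ k x‖ * ‖θ k x‖ = ‖x‖ * ‖x‖ := by
    have hs : star x * x ∈ N := N.mul_mem (star_mem (s := N) hx) hx
    calc ‖θ k x‖ * ‖θ k x‖ = ‖star (θ k x) * θ k x‖ := (CStarRing.norm_star_mul_self).symm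
    _ = ‖θ k (star x * x)‖ := by
        rw [hθ.2.2.2.2.2.1 k (star x) (star_mem (s := N) hx) x hx, hθ.2.2.2.2.2.2 k x hx]
    _ = ‖star x * x‖ := selfadj _ hs (IsSelfAdjoint.star_mul_self x)
    _ = ‖x‖ * ‖x‖ := CStarRing.norm_star_mul_self
  exact (mul_self_inj (norm_nonneg _) (norm_nonneg _)).mp hx2

end action

section diag

lemma exists_diag (X : K → (𝓗 →L[ℂ] 𝓗)) (C : ℝ) (hC0 : 0 ≤ C) (hC : ∀ k, ‖X k‖ ≤ C) :
    ∃ T : lp (fun _ : K => 𝓗) 2 →L[ℂ] lp (fun _ : K => 𝓗) 2,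
      ∀ (ξ : lp (fun _ : K => 𝓗) 2) (k : K), (T ξ) k = X k (ξ k) := by
  have hq : 0 < (2 : ℝ≥0∞).toReal := by norm_num
  set q : ℝ := (2 : ℝ≥0∞).toReal with hqdef
  have hbound : ∀ (f : lp (fun _ : K => 𝓗) 2) (k : K),
      ‖X k (f k)‖ ^ q ≤ C ^ q * ‖f k‖ ^ q := by
    intro f k
    calc ‖X k (f k)‖ ^ q ≤ (C * ‖f k‖) ^ q := by
          apply Real.rpow_le_rpow (norm_nonneg _) ?_ hq.le
          exact ((X k).le_opNorm (f k)).trans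
            (mul_le_mul_of_nonneg_right (hC k) (norm_nonneg _))
    _ = C ^ q * ‖f k‖ ^ q := Real.mul_rpow hC0 (norm_nonneg _)
  have hsumR : ∀ f : lp (fun _ : K => 𝓗) 2,
      Summable (fun k => C ^ q * ‖f k‖ ^ q) :=
    fun f => ((lp.hasSum_norm hq f).summable).mul_left _
  have hmem : ∀ f : lp (fun _ : K => 𝓗) 2, Memℓp (fun k => X k (f k)) 2 := by
    intro f
    apply memℓp_gen
    exact Summable.of_nonneg_of_le
      (fun k => Real.rpow_nonneg (norm_nonneg _) _) (hbound f) (hsumR f)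
  let F : lp (fun _ : K => 𝓗) 2 →ₗ[ℂ] lp (fun _ : K => 𝓗) 2 :=
    { toFun := fun f => ⟨fun k => X k (f k), hmem f⟩
      map_add' := fun f g => by
        apply lp.ext; funext k
        have h1 := congrFun (lp.coeFn_add f g) k
        have h2 := congrFun (lp.coeFn_add (⟨fun k => X k (f k), hmem f⟩ : lp (fun _ : K => 𝓗) 2)
          (⟨fun k => X k (g k), hmem g⟩ : lp (fun _ : K => 𝓗) 2)) k
        simp only [Pi.add_apply] at h1 h2
        show X k ((f + g) k) = _
        rw [h1, map_add]
        exact h2.symm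
      map_smul' := fun c f => by
        apply lp.ext; funext k
        have h1 := congrFun (lp.coeFn_smul c f) k
        have h2 := congrFun (lp.coeFn_smul c (⟨fun k => X k (f k), hmem f⟩ :
          lp (fun _ : K => 𝓗) 2)) k
        simp only [Pi.smul_apply] at h1 h2
        show X k ((c • f) k) = _
        rw [h1, map_smul]
        exact h2.symm }
  have hFnorm : ∀ f, ‖F f‖ ≤ C * ‖f‖ := by
    intro f
    have h1 : ‖F f‖ ^ q ≤ (C * ‖f‖) ^ q := by
      calc ‖F f‖ ^ q = ∑' k, ‖X k (f k)‖ ^ q := lp.norm_rpow_eq_tsum hq (F f)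
      _ ≤ ∑' k, C ^ q * ‖f k‖ ^ q := by
          apply Summable.tsum_le_tsum (hbound f) ?_ (hsumR f)
          exact Summable.of_nonneg_of_le
            (fun k => Real.rpow_nonneg (norm_nonneg _) _) (hbound f) (hsumR f)
      _ = C ^ q * ∑' k, ‖f k‖ ^ q := tsum_mul_left
      _ = C ^ q * ‖f‖ ^ q := by rw [← lp.norm_rpow_eq_tsum hq f]
      _ = (C * ‖f‖) ^ q := (Real.mul_rpow hC0 (norm_nonneg _)).symm
    by_contra hcon
    push_neg at hcon
    exact absurd h1 (not_le.mpr (Real.rpow_lt_rpow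
      (mul_nonneg hC0 (norm_nonneg _)) hcon hq))
  refine ⟨F.mkContinuous C hFnorm, fun ξ k => rfl⟩

end diag

/-- if `𝒜` is the set of operators on `ℓ²(K,𝓗)` of the form
`(Tξ)(k) = z(θ_k(x)(ξ(k)))` with `x ∈ N` and `z ∈ N'`, then `𝒜''` is exactly the set of
"diagonal" operators `(Tξ)(k) = X_k(ξ(k))` for uniformly bounded families
`(X_k)_{k ∈ K}` in `B(𝓗)`. -/
theorem double_commutant_of_diagonal_algebra
    (N : VonNeumannAlgebra 𝓗) [Countable K]
    (hN : IsIIOneFactor N)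
    (θ : K → (𝓗 →L[ℂ] 𝓗) → (𝓗 →L[ℂ] 𝓗))
    (hθ : IsStarAction N θ) (hout : IsProperlyOuter N θ) :
    Set.centralizer (Set.centralizer
      {T : lp (fun _ : K => 𝓗) 2 →L[ℂ] lp (fun _ : K => 𝓗) 2 |
        ∃ x ∈ N, ∃ z ∈ Set.centralizer (N : Set (𝓗 →L[ℂ] 𝓗)),
          ∀ (ξ : lp (fun _ : K => 𝓗) 2) (k : K), (T ξ) k = z (θ k x (ξ k))})
    = {T : lp (fun _ : K => 𝓗) 2 →L[ℂ] lp (fun _ : K => 𝓗) 2 |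
        ∃ X : K → (𝓗 →L[ℂ] 𝓗), (∃ C : ℝ, ∀ k : K, ‖X k‖ ≤ C) ∧
          ∀ (ξ : lp (fun _ : K => 𝓗) 2) (k : K), (T ξ) k = X k (ξ k)} := by
  letI : DecidableEq K := Classical.decEq K
  set 𝒜 : Set (lp (fun _ : K => 𝓗) 2 →L[ℂ] lp (fun _ : K => 𝓗) 2) :=
    {T : lp (fun _ : K => 𝓗) 2 →L[ℂ] lp (fun _ : K => 𝓗) 2 |
      ∃ x ∈ N, ∃ z ∈ Set.centralizer (N : Set (𝓗 →L[ℂ] 𝓗)),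
        ∀ (ξ : lp (fun _ : K => 𝓗) 2) (k : K), (T ξ) k = z (θ k x (ξ k))} with h𝒜
  -- Key: every element of the commutant of 𝒜 acts as a scalar in each coordinate.
  have hkey : ∀ S : lp (fun _ : K => 𝓗) 2 →L[ℂ] lp (fun _ : K => 𝓗) 2,
      (∀ A ∈ 𝒜, A * S = S * A) → ∀ g : K, ∃ c : ℂ,
      ∀ ξ : lp (fun _ : K => 𝓗) 2, (S ξ) g = c • ξ g := by
    intro S hS g
    set Ent : K → K → (𝓗 →L[ℂ] 𝓗) :=
      fun i j => (evalCLM' i).comp (S.comp (singleCLM' j)) with hEnt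
    have claimA : ∀ (i j : K), ∀ x ∈ N, ∀ z ∈ Set.centralizer (N : Set (𝓗 →L[ℂ] 𝓗)),
        ∀ v : 𝓗, z (θ i x (Ent i j v)) = Ent i j (z (θ j x v)) := by
      intro i j x hx z hz v
      obtain ⟨T', hT'⟩ := exists_diag (fun k => z * θ k x) (‖z‖ * ‖x‖)
        (mul_nonneg (norm_nonneg _) (norm_nonneg _))
        (fun k => (norm_mul_le _ _).trans (mul_le_mul_of_nonneg_left
          (le_of_eq (norm_theta_eq hθ k hx)) (norm_nonneg _)))
      have hT'mem : T' ∈ 𝒜 := ⟨x, hx, z, hz, fun ξ k => hT' ξ k⟩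
      have hcomm := hS T' hT'mem
      have hTσ : T' (lp.single 2 j v) = lp.single 2 j (z (θ j x v)) := by
        apply lp.ext; funext m
        rw [hT' _ m]
        by_cases hm : m = j
        · subst hm
          rw [lp.single_apply_self, lp.single_apply_self]
          rfl
        · rw [lp.single_apply_ne _ _ _ hm, lp.single_apply_ne _ _ _ hm, map_zero]
      have happ := congrArg
        (fun W : lp (fun _ : K => 𝓗) 2 →L[ℂ] lp (fun _ : K => 𝓗) 2 =>
          (W (lp.single 2 j v) : ∀ _ : K, 𝓗) i) hcomm
      simp only [ContinuousLinearMap.mul_apply] at happ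
      rw [hT' _ i, hTσ] at happ
      exact happ
    have claimB : ∀ i j : K, Ent i j ∈ (N : Set (𝓗 →L[ℂ] 𝓗)) := by
      intro i j
      rw [← N.centralizer_centralizer]
      rw [Set.mem_centralizer_iff]
      intro z hz
      apply ContinuousLinearMap.ext; intro v
      have h := claimA i j 1 N.one_mem z hz v
      rw [theta_one_eq_one hθ i, theta_one_eq_one hθ j,
        ContinuousLinearMap.one_apply, ContinuousLinearMap.one_apply] at h
      exact h
    have claimC : ∀ i j : K, i ≠ j → Ent i j = 0 := by
      intro i j hij
      apply hout (i * j⁻¹) (fun h1 => hij (mul_inv_eq_one.mp h1)) (Ent i j) (claimB i j)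
      intro y hy
      apply ContinuousLinearMap.ext; intro v
      have h := claimA i j (θ j⁻¹ y) (hθ.1 j⁻¹ y hy) 1 Set.one_mem_centralizer v
      rw [theta_theta_inv hθ j hy, ContinuousLinearMap.one_apply,
        ContinuousLinearMap.one_apply, ← hθ.2.2.1 i j⁻¹ y hy] at h
      exact h.symm
    have claimD : Ent g g ∈ Set.centralizer (N : Set (𝓗 →L[ℂ] 𝓗)) := by
      rw [Set.mem_centralizer_iff]
      intro y hy
      apply ContinuousLinearMap.ext; intro v
      have h := claimA g g (θ g⁻¹ y) (hθ.1 g⁻¹ y hy) 1 Set.one_mem_centralizer v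
      rw [theta_theta_inv hθ g hy, ContinuousLinearMap.one_apply,
        ContinuousLinearMap.one_apply] at h
      exact h
    obtain ⟨c, hc⟩ := (Set.ext_iff.mp hN.1 (Ent g g)).mp ⟨claimB g g, claimD⟩
    refine ⟨c, fun ξ => ?_⟩
    have hsum : HasSum (fun j : K => (S (lp.single 2 j (ξ j)) : ∀ _ : K, 𝓗) g) ((S ξ) g) :=
      (lp.hasSum_single (E := fun _ : K => 𝓗) (p := 2) (by norm_num) ξ).mapL
        ((evalCLM' g).comp S)
    have h3 : (S (lp.single 2 g (ξ g)) : ∀ _ : K, 𝓗) g = c • ξ g := by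
      have h4 : Ent g g (ξ g) = c • ξ g := by
        rw [← hc]
        rfl
      exact h4
    have h4 : ∀ j : K, j ≠ g → (S (lp.single 2 j (ξ j)) : ∀ _ : K, 𝓗) g = 0 := by
      intro j hj
      have h5 : Ent g j (ξ j) = 0 := by
        rw [claimC g j (fun h => hj h.symm)]
        rfl
      exact h5
    exact hsum.unique (h3 ▸ hasSum_single
      (f := fun j : K => (S (lp.single 2 j (ξ j)) : ∀ _ : K, 𝓗) g) g h4)
  apply Set.Subset.antisymm
  · -- 𝒜'' ⊆ diagonal operators
    intro S hS
    refine ⟨fun k => (evalCLM' k).comp (S.comp (singleCLM' k)), ⟨‖S‖, ?_⟩, ?_⟩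
    · intro k
      apply ContinuousLinearMap.opNorm_le_bound _ (norm_nonneg S)
      intro v
      simp only [ContinuousLinearMap.comp_apply, evalCLM'_apply, singleCLM'_apply]
      calc ‖(S (lp.single 2 k v) : ∀ _ : K, 𝓗) k‖ ≤ ‖S (lp.single 2 k v)‖ :=
            lp.norm_apply_le_norm (by norm_num) _ k
        _ ≤ ‖S‖ * ‖lp.single (E := fun _ : K => 𝓗) 2 k v‖ := S.le_opNorm _
        _ = ‖S‖ * ‖v‖ := by rw [lp.norm_single (E := fun _ : K => 𝓗) (p := 2) (by norm_num) k v]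
    · intro ξ k
      simp only [ContinuousLinearMap.comp_apply, evalCLM'_apply, singleCLM'_apply]
      set P : lp (fun _ : K => 𝓗) 2 →L[ℂ] lp (fun _ : K => 𝓗) 2 :=
        (singleCLM' (𝓗 := 𝓗) k).comp (evalCLM' k) with hP
      have hPmem : P ∈ Set.centralizer 𝒜 := by
        rw [Set.mem_centralizer_iff]
        rintro A ⟨x, hx, z, hz, hA⟩
        apply ContinuousLinearMap.ext; intro η
        apply lp.ext; funext m
        simp only [ContinuousLinearMap.mul_apply]
        show (A (P η) : ∀ _ : K, 𝓗) m = (P (A η) : ∀ _ : K, 𝓗) m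
        rw [hA (P η) m]
        have hPη : (P η : ∀ _ : K, 𝓗) m = lp.single (E := fun _ : K => 𝓗) 2 k (η k) m := rfl
        have hPAη : (P (A η) : ∀ _ : K, 𝓗) m = lp.single (E := fun _ : K => 𝓗) 2 k ((A η) k) m := rfl
        rw [hPη, hPAη]
        by_cases hm : m = k
        · subst hm
          rw [lp.single_apply_self, lp.single_apply_self, hA η m]
        · rw [lp.single_apply_ne _ _ _ hm, lp.single_apply_ne _ _ _ hm,
            map_zero, map_zero]
      have hcomm := hS P hPmem
      have happ := congrArg
        (fun W : lp (fun _ : K => 𝓗) 2 →L[ℂ] lp (fun _ : K => 𝓗) 2 =>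
          (W ξ : ∀ _ : K, 𝓗) k) hcomm
      simp only [ContinuousLinearMap.mul_apply] at happ
      -- happ : (P (S ξ)) k = (S (P ξ)) k
      have h1 : (P (S ξ) : ∀ _ : K, 𝓗) k = (S ξ) k := lp.single_apply_self 2 k _
      have h2 : P ξ = lp.single 2 k (ξ k) := rfl
      show (S ξ) k = (S (lp.single 2 k (ξ k)) : ∀ _ : K, 𝓗) k
      rw [← h2, ← happ, h1]
  · -- diagonal operators ⊆ 𝒜''
    rintro T ⟨X, ⟨C, hC⟩, hco⟩
    rw [Set.mem_centralizer_iff]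
    intro S hS
    apply ContinuousLinearMap.ext; intro ξ
    apply lp.ext; funext g
    obtain ⟨c, hc⟩ := hkey S (Set.mem_centralizer_iff.mp hS) g
    simp only [ContinuousLinearMap.mul_apply]
    show (S (T ξ) : ∀ _ : K, 𝓗) g = (T (S ξ) : ∀ _ : K, 𝓗) g
    rw [hc (T ξ), hco ξ g, hco (S ξ) g, hc ξ, (X g).map_smul]


end
end
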